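/- Let R be a commutative ring, S a multiplicative subset of R, and E an R-module. Then the following are equivalent: (1) E is u-S-injective; (2) for every short exact sequence 0 → A →^f B →^g C → 0 of R-modules, the induced sequence 0 → Hom_R(C,E) →^{g*} Hom_R(B,E) →^{f*} Hom_R(A,E) → 0 is u-S-exact; (3) Ext_R^1(M, E) is u-S-torsion for every R-module M; (4) Ext_R^n(M, E) is u-S-torsion for every R-module M and every n ≥ 1. -/

import Mathlib

open CategoryTheory

universe u v w

/-- An `R`-module `T` is uniformly `S`-torsion if there exists `s ∈ S` with `s • T = 0`. -/
def IsUSTorsion (R : Type*) [CommRing R] (S : Submonoid R)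
    (M : Type*) [AddCommGroup M] [Module R M] : Prop :=
  ∃ s ∈ S, ∀ x : M, s • x = 0

/-- A sequence `0 → A →[f] B →[g] C → 0` of `R`-modules is uniformly `S`-exact if there exists
`s ∈ S` with `s • ker f = 0`, `s • ker g ⊆ im f`, `s • im f ⊆ ker g` and `s • C ⊆ im g`. -/
def IsUSExact {R : Type*} [CommRing R] (S : Submonoid R)
    {A B C : Type*} [AddCommGroup A] [AddCommGroup B] [AddCommGroup C]
    [Module R A] [Module R B] [Module R C]
    (f : A →ₗ[R] B) (g : B →ₗ[R] C) : Prop :=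
  ∃ s ∈ S, (∀ x ∈ LinearMap.ker f, s • x = 0) ∧
    (∀ x ∈ LinearMap.ker g, s • x ∈ LinearMap.range f) ∧
    (∀ x ∈ LinearMap.range f, s • x ∈ LinearMap.ker g) ∧
    (∀ c : C, s • c ∈ LinearMap.range g)

/-- An `R`-module `E` is uniformly `S`-injective if for every `u`-`S`-exact sequence
`0 → A → B → C → 0`, the induced sequence
`0 → Hom_R(C,E) → Hom_R(B,E) → Hom_R(A,E) → 0` is `u`-`S`-exact. -/
def IsUSInjective {R : Type u} [CommRing R] (S : Submonoid R)
    (E : Type v) [AddCommGroup E] [Module R E] : Prop :=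
  ∀ (A B C : Type w) [AddCommGroup A] [AddCommGroup B] [AddCommGroup C]
    [Module R A] [Module R B] [Module R C]
    (f : A →ₗ[R] B) (g : B →ₗ[R] C),
    IsUSExact S f g →
    IsUSExact S (LinearMap.lcomp R E g) (LinearMap.lcomp R E f)

section Aux
variable {R : Type u} [CommRing R] {S : Submonoid R}

lemma isUSTorsion_of_iso {M N : ModuleCat.{u} R} (e : M ≅ N) (h : IsUSTorsion R S M) :
    IsUSTorsion R S N := by
  obtain ⟨s, hs, h⟩ := h
  refine ⟨s, hs, fun x => ?_⟩
  let e' := e.toLinearEquiv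
  have := congrArg e' (h (e'.symm x))
  rwa [map_smul, map_zero, e'.apply_symm_apply] at this

lemma torsion_homology_iff (S₀ : ShortComplex (ModuleCat.{u} R)) :
    IsUSTorsion R S S₀.homology ↔
      ∃ s ∈ S, ∀ x : S₀.X₂, S₀.g x = 0 → ∃ y, S₀.f y = s • x := by
  constructor
  · intro h
    obtain ⟨s, hs, h⟩ := (isUSTorsion_of_iso S₀.moduleCatHomologyIso h :)
    refine ⟨s, hs, fun x hx => ?_⟩
    have := h (Submodule.Quotient.mk ⟨x, hx⟩)
    erw [← Submodule.Quotient.mk_smul, Submodule.Quotient.mk_eq_zero] at this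
    obtain ⟨y, hy⟩ := this
    exact ⟨y, congrArg Subtype.val hy⟩
  · rintro ⟨s, hs, h⟩
    refine isUSTorsion_of_iso S₀.moduleCatHomologyIso.symm ⟨s, hs, fun z => ?_⟩
    obtain ⟨⟨x, hx⟩, rfl⟩ := Submodule.Quotient.mk_surjective _ z
    erw [← Submodule.Quotient.mk_smul, Submodule.Quotient.mk_eq_zero]
    obtain ⟨y, hy⟩ := h x hx
    exact ⟨y, Subtype.ext hy⟩

end Aux

section Aux2
variable {R : Type u} [CommRing R] {S : Submonoid R}

lemma ext_torsion_iff (M E' : ModuleCat.{u} R) (P : ProjectiveResolution M) (m : ℕ) :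
    IsUSTorsion R S (((Ext R (ModuleCat.{u} R) (m+1)).obj (Opposite.op M)).obj E') ↔
      ∃ s ∈ S, ∀ h : P.complex.X (m+1) ⟶ E', P.complex.d (m+2) (m+1) ≫ h = 0 →
        ∃ e : P.complex.X m ⟶ E', P.complex.d (m+1) m ≫ e = s • h := by
  set K := P.complex.linearYonedaObj R E' with hK
  have e2 : ((Ext R (ModuleCat.{u} R) (m+1)).obj (Opposite.op M)).obj E' ≅
      (K.sc' m (m+1) (m+2)).homology :=
    P.isoExt (m+1) E' ≪≫ K.homologyIsoSc' m (m+1) (m+2) (by simp) (by simp)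
  have h1 : IsUSTorsion R S (((Ext R (ModuleCat.{u} R) (m+1)).obj (Opposite.op M)).obj E') ↔
      IsUSTorsion R S (K.sc' m (m+1) (m+2)).homology :=
    ⟨isUSTorsion_of_iso e2, isUSTorsion_of_iso e2.symm⟩
  rw [h1, torsion_homology_iff]
  constructor
  · rintro ⟨s, hs, h⟩
    refine ⟨s, hs, fun x hx => ?_⟩
    obtain ⟨y, hy⟩ := h x hx
    exact ⟨y, hy⟩
  · rintro ⟨s, hs, h⟩
    refine ⟨s, hs, fun x hx => ?_⟩
    obtain ⟨y, hy⟩ := h x hx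
    exact ⟨y, hy⟩

end Aux2

section Aux3
variable {R : Type u} [CommRing R] {S : Submonoid R}

lemma factor_through_surjective {M N P' : Type*} [AddCommGroup M] [AddCommGroup N]
    [AddCommGroup P'] [Module R M] [Module R N] [Module R P']
    (ρ : M →ₗ[R] N) (Θ : M →ₗ[R] P') (hsurj : Function.Surjective ρ)
    (hker : ∀ x, ρ x = 0 → Θ x = 0) : ∃ K : N →ₗ[R] P', ∀ x, K (ρ x) = Θ x := by
  have hle : LinearMap.ker ρ ≤ LinearMap.ker Θ := fun x hx => hker x hx
  refine ⟨((LinearMap.ker ρ).liftQ Θ hle).comp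
    (LinearMap.quotKerEquivOfSurjective ρ hsurj).symm.toLinearMap, fun x => ?_⟩
  have : (LinearMap.quotKerEquivOfSurjective ρ hsurj).symm (ρ x) =
      Submodule.Quotient.mk x := by
    rw [LinearEquiv.symm_apply_eq]
    simp [LinearMap.quotKerEquivOfSurjective, LinearMap.quotKerEquivRange]
  simp [this]

end Aux3

section LemB
variable {R : Type u} [CommRing R] {S : Submonoid R}

/-- P2 → P4 : if Hom sends short exact sequences to u-S-exact sequences,
then Ext^n(M,E) is u-S-torsion for n ≥ 1. -/
lemma lemB (E : Type u) [AddCommGroup E] [Module R E]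
    (h2 : ∀ (A B C : Type u) [AddCommGroup A] [AddCommGroup B] [AddCommGroup C]
      [Module R A] [Module R B] [Module R C]
      (f : A →ₗ[R] B) (g : B →ₗ[R] C),
      Function.Injective f → Function.Exact f g → Function.Surjective g →
        IsUSExact S (LinearMap.lcomp R E g) (LinearMap.lcomp R E f))
    (M : Type u) [AddCommGroup M] [Module R M] (n : ℕ) (hn : 1 ≤ n) :
    IsUSTorsion R S
      (((Ext R (ModuleCat.{u} R) n).obj (Opposite.op (ModuleCat.of R M))).obj
        (ModuleCat.of R E)) := by
  obtain ⟨m, rfl⟩ : ∃ m, n = m + 1 := ⟨n - 1, (Nat.succ_pred_eq_of_pos hn).symm⟩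
  obtain ⟨P⟩ := (HasProjectiveResolution.out (Z := ModuleCat.of R M))
  rw [ext_torsion_iff (ModuleCat.of R M) (ModuleCat.of R E) P m]
  -- the boundary map
  set d : ↑(P.complex.X (m+1)) →ₗ[R] ↑(P.complex.X m) := (P.complex.d (m+1) m).hom with hd
  obtain ⟨s, hs, -, -, -, h4⟩ :=
    h2 ↥(LinearMap.range d) ↑(P.complex.X m) (↑(P.complex.X m) ⧸ LinearMap.range d)
      (LinearMap.range d).subtype (LinearMap.range d).mkQ
      (Submodule.injective_subtype _) (LinearMap.exact_subtype_mkQ _)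
      (Submodule.mkQ_surjective _)
  refine ⟨s, hs, fun h hcoc => ?_⟩
  -- h vanishes on ker d
  have hrk : LinearMap.range (P.complex.d (m+2) (m+1)).hom = LinearMap.ker d :=
    (P.exact_succ m).moduleCat_range_eq_ker
  have hker : ∀ x, d.rangeRestrict x = 0 → h.hom x = 0 := by
    intro x hx
    have hxk : x ∈ LinearMap.ker d := by
      have := congrArg Subtype.val hx
      simpa using this
    rw [← hrk] at hxk
    obtain ⟨y, rfl⟩ := hxk
    exact congrFun (congrArg (fun (f : _ ⟶ _) => (f : _ → _)) hcoc) y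
  obtain ⟨k, hk⟩ := factor_through_surjective d.rangeRestrict
    h.hom (LinearMap.surjective_rangeRestrict d) hker
  obtain ⟨e, he⟩ := h4 k
  refine ⟨ModuleCat.ofHom e, ?_⟩
  apply ModuleCat.hom_ext
  apply LinearMap.ext
  intro x
  have h1 : e (d x) = e ((LinearMap.range d).subtype (d.rangeRestrict x)) := rfl
  have h2' : (LinearMap.lcomp R E (LinearMap.range d).subtype e) (d.rangeRestrict x)
      = (s • k) (d.rangeRestrict x) := by rw [he]
  calc (P.complex.d (m+1) m ≫ ModuleCat.ofHom e) x = e (d x) := rfl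
    _ = s • (k (d.rangeRestrict x)) := by rw [h1]; exact h2'
    _ = s • (h.hom x) := by rw [hk]
    _ = (s • h) x := rfl

end LemB

section LemL
variable {R : Type u} [CommRing R] {S : Submonoid R}

/-- If `Ext^1(B/A₁, E)` is u-S-torsion, then maps `A₁ → E` extend to `B` up to
multiplication by some fixed `u ∈ S`. -/
lemma extend_lemma {B : Type u} [AddCommGroup B] [Module R B]
    (E : Type u) [AddCommGroup E] [Module R E] (A₁ : Submodule R B)
    (hExt : IsUSTorsion R S
      (((Ext R (ModuleCat.{u} R) 1).obj (Opposite.op (ModuleCat.of R (B ⧸ A₁)))).obj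
        (ModuleCat.of R E))) :
    ∃ u ∈ S, ∀ k : ↥A₁ →ₗ[R] E, ∃ K : B →ₗ[R] E, ∀ a : ↥A₁, K a = u • k a := by
  obtain ⟨P⟩ := (HasProjectiveResolution.out (Z := ModuleCat.of R (B ⧸ A₁)))
  have hExt' : IsUSTorsion R S
      (((Ext R (ModuleCat.{u} R) (0+1)).obj (Opposite.op (ModuleCat.of R (B ⧸ A₁)))).obj
        (ModuleCat.of R E)) := hExt
  rw [ext_torsion_iff (ModuleCat.of R (B ⧸ A₁)) (ModuleCat.of R E) P 0] at hExt'
  obtain ⟨u, hu, hcoc⟩ := hExt'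
  set d10 : ↑(P.complex.X 1) →ₗ[R] ↑(P.complex.X 0) := (P.complex.d 1 0).hom with hd10
  set d21 : ↑(P.complex.X 2) →ₗ[R] ↑(P.complex.X 1) := (P.complex.d 2 1).hom with hd21
  set πl : ↑(P.complex.X 0) →ₗ[R] (B ⧸ A₁) := (P.π.f 0).hom with hπl
  haveI : Epi (ModuleCat.ofHom A₁.mkQ) :=
    (ModuleCat.epi_iff_surjective _).mpr (Submodule.mkQ_surjective _)
  set φ : ↑(P.complex.X 0) →ₗ[R] B :=
    (@Projective.factorThru _ _ _ _ _ _ (P.π.f 0) (ModuleCat.ofHom A₁.mkQ) this :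
      P.complex.X 0 ⟶ ModuleCat.of R B).hom with hφdef
  have hφ : ∀ p : ↑(P.complex.X 0), A₁.mkQ (φ p) = πl p := by
    intro p
    have := congrFun (congrArg
      (fun (f : P.complex.X 0 ⟶ ModuleCat.of R (B ⧸ A₁)) => (f : ↑(P.complex.X 0) → B ⧸ A₁))
      (@Projective.factorThru_comp _ _ _ _ _ _ (P.π.f 0) (ModuleCat.ofHom A₁.mkQ) this)) p
    exact this
  have hπsurj : Function.Surjective πl := by
    have : Epi (P.π.f 0) := inferInstance
    rw [ModuleCat.epi_iff_surjective] at this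
    exact this
  have hd10π : ∀ x : ↑(P.complex.X 1), πl (d10 x) = 0 := by
    intro x
    have := congrFun (congrArg
      (fun (f : P.complex.X 1 ⟶ ModuleCat.of R (B ⧸ A₁)) => (f : ↑(P.complex.X 1) → B ⧸ A₁))
      P.complex_d_comp_π_f_zero) x
    exact this
  have hdd : ∀ x : ↑(P.complex.X 2), d10 (d21 x) = 0 := by
    intro x
    have := congrFun (congrArg
      (fun (f : P.complex.X 2 ⟶ P.complex.X 0) => (f : ↑(P.complex.X 2) → ↑(P.complex.X 0)))
      (P.complex.d_comp_d 2 1 0)) x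
    exact this
  have hψmem : ∀ x : ↑(P.complex.X 1), φ (d10 x) ∈ A₁ := by
    intro x
    rw [← Submodule.Quotient.mk_eq_zero A₁, ← Submodule.mkQ_apply, hφ]
    exact hd10π x
  set ψ : ↑(P.complex.X 1) →ₗ[R] ↥A₁ :=
    LinearMap.codRestrict A₁ (φ ∘ₗ d10) hψmem with hψdef
  have hψcoe : ∀ x, ((ψ x : ↥A₁) : B) = φ (d10 x) := fun x => rfl
  have hrk : LinearMap.range d10 = LinearMap.ker πl := P.exact₀.moduleCat_range_eq_ker
  refine ⟨u, hu, fun k => ?_⟩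
  have hc : P.complex.d 2 1 ≫ (ModuleCat.ofHom (k ∘ₗ ψ) : P.complex.X 1 ⟶ ModuleCat.of R E)
      = 0 := by
    apply ModuleCat.hom_ext
    apply LinearMap.ext
    intro x
    show k (ψ (d21 x)) = 0
    have h0 : ψ (d21 x) = 0 := by
      apply Subtype.ext
      simp [hψcoe (d21 x), hdd x]
    rw [h0, map_zero]
  obtain ⟨e, he⟩ := hcoc (ModuleCat.ofHom (k ∘ₗ ψ)) hc
  set el : ↑(P.complex.X 0) →ₗ[R] E := e.hom with heldef
  have he' : ∀ x : ↑(P.complex.X 1), el (d10 x) = u • k (ψ x) := by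
    intro x
    have := congrFun (congrArg
      (fun (f : P.complex.X (0+1) ⟶ ModuleCat.of R E) => (f : ↑(P.complex.X 1) → E)) he) x
    exact this
  set ρ : (↥A₁ × ↑(P.complex.X 0)) →ₗ[R] B := A₁.subtype.coprod φ with hρdef
  have hρsurj : Function.Surjective ρ := by
    intro b
    obtain ⟨p, hp⟩ := hπsurj (A₁.mkQ b)
    have hmem : b - φ p ∈ A₁ := by
      rw [← Submodule.Quotient.mk_eq_zero A₁, ← Submodule.mkQ_apply, map_sub, hφ, hp, sub_self]
    exact ⟨⟨⟨b - φ p, hmem⟩, p⟩, by simp [hρdef]⟩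
  set Θ : (↥A₁ × ↑(P.complex.X 0)) →ₗ[R] E := (u • k).coprod el with hΘdef
  have hkerΘ : ∀ x, ρ x = 0 → Θ x = 0 := by
    rintro ⟨a, p⟩ hx
    have hx' : (a : B) + φ p = 0 := by simpa [hρdef] using hx
    have hφp : φ p = -(a : B) := eq_neg_of_add_eq_zero_right hx'
    have hπp : p ∈ LinearMap.ker πl := by
      rw [LinearMap.mem_ker, ← hφ p, hφp, map_neg]
      simp [Submodule.mkQ_apply, Submodule.Quotient.mk_eq_zero, a.2]
    rw [← hrk] at hπp
    obtain ⟨q, hq⟩ := hπp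
    have ha : a = -ψ q := by
      apply Subtype.ext
      have hcoe : ((-ψ q : ↥A₁) : B) = -(φ (d10 q)) := by simp [hψcoe q]
      rw [hcoe, hq, hφp, neg_neg]
    have : Θ (a, p) = u • k a + el p := by simp [hΘdef]
    rw [this, ha, ← hq, he', map_neg, smul_neg, neg_add_cancel]
  obtain ⟨K, hK⟩ := factor_through_surjective ρ Θ hρsurj hkerΘ
  refine ⟨K, fun a => ?_⟩
  have := hK ⟨a, 0⟩
  simpa [hρdef, hΘdef] using this
end LemL

section Main
variable {R : Type u} [CommRing R] {S : Submonoid R}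

lemma lemA (E : Type u) [AddCommGroup E] [Module R E] (h1 : IsUSInjective.{u, u, u} S E) :
    ∀ (A B C : Type u) [AddCommGroup A] [AddCommGroup B] [AddCommGroup C]
      [Module R A] [Module R B] [Module R C]
      (f : A →ₗ[R] B) (g : B →ₗ[R] C),
      Function.Injective f → Function.Exact f g → Function.Surjective g →
        IsUSExact S (LinearMap.lcomp R E g) (LinearMap.lcomp R E f) := by
  intro A B C _ _ _ _ _ _ f g hinj hex hsurj
  refine h1 A B C f g ⟨1, S.one_mem, ?_, ?_, ?_, ?_⟩
  · intro x hx
    rw [one_smul]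
    exact hinj (by rw [LinearMap.mem_ker.mp hx, map_zero])
  · intro x hx
    rw [one_smul]
    exact (hex x).mp (LinearMap.mem_ker.mp hx)
  · intro x hx
    rw [one_smul]
    obtain ⟨a, rfl⟩ := hx
    exact LinearMap.mem_ker.mpr ((hex (f a)).mpr ⟨a, rfl⟩)
  · intro c
    rw [one_smul]
    exact hsurj c

lemma lemC (E : Type u) [AddCommGroup E] [Module R E]
    (h3 : ∀ (M : Type u) [AddCommGroup M] [Module R M],
      IsUSTorsion R S
        (((Ext R (ModuleCat.{u} R) 1).obj (Opposite.op (ModuleCat.of R M))).obj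
          (ModuleCat.of R E))) :
    IsUSInjective.{u, u, u} S E := by
  intro A B C _ _ _ _ _ _ f g hUS
  obtain ⟨s, hs, hs1, hs2, hs3, hs4⟩ := hUS
  obtain ⟨u₁, hu₁, hext₁⟩ := extend_lemma E (LinearMap.range g) (h3 (C ⧸ LinearMap.range g))
  obtain ⟨u₂, hu₂, hext₂⟩ := extend_lemma E (LinearMap.range f) (h3 (B ⧸ LinearMap.range f))
  refine ⟨u₂ * u₁ * s, mul_mem (mul_mem hu₂ hu₁) hs, ?_, ?_, ?_, ?_⟩
  · -- h : C →ₗ E with h ∘ g = 0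
    intro h hh
    have hh' : h.comp g = 0 := hh
    have hsh : s • h = 0 := by
      apply LinearMap.ext
      intro c
      obtain ⟨b, hb⟩ := hs4 c
      show s • h c = (0 : C →ₗ[R] E) c
      rw [← map_smul, ← hb, ← LinearMap.comp_apply, hh']
      rfl
    rw [mul_smul, hsh, smul_zero]
  · -- h : B →ₗ E with h ∘ f = 0
    intro h hh
    have hh' : h.comp f = 0 := hh
    have hker : ∀ b, g.rangeRestrict b = 0 → (s • h) b = 0 := by
      intro b hb
      have hbk : g b = 0 := congrArg Subtype.val hb
      obtain ⟨a, ha⟩ := hs2 b (LinearMap.mem_ker.mpr hbk)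
      show s • h b = 0
      rw [← map_smul, ← ha, ← LinearMap.comp_apply, hh']
      rfl
    obtain ⟨k, hk⟩ := factor_through_surjective g.rangeRestrict (s • h)
      (LinearMap.surjective_rangeRestrict g) hker
    obtain ⟨K, hK⟩ := hext₁ k
    refine ⟨u₂ • K, ?_⟩
    apply LinearMap.ext
    intro b
    show u₂ • K (g b) = (u₂ * u₁ * s) • h b
    have : K (g b) = u₁ • k (g.rangeRestrict b) := hK (g.rangeRestrict b)
    rw [this, hk]
    show u₂ • u₁ • s • h b = (u₂ * u₁ * s) • h b
    rw [← mul_smul, ← mul_smul]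
  · -- h ∈ range (lcomp g)
    intro h hh
    obtain ⟨H, rfl⟩ := hh
    apply LinearMap.mem_ker.mpr
    apply LinearMap.ext
    intro a
    show (u₂ * u₁ * s) • (LinearMap.lcomp R E g H) (f a) = 0
    have hgf : s • g (f a) = 0 := by
      have := hs3 (f a) ⟨a, rfl⟩
      rw [LinearMap.mem_ker, map_smul] at this
      exact this
    show (u₂ * u₁ * s) • H (g (f a)) = 0
    rw [mul_smul, ← map_smul, hgf, map_zero, smul_zero]
  · -- k0 : A →ₗ E
    intro k0
    have hker : ∀ a, f.rangeRestrict a = 0 → (s • k0) a = 0 := by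
      intro a ha
      have hak : f a = 0 := congrArg Subtype.val ha
      show s • k0 a = 0
      rw [← map_smul, hs1 a (LinearMap.mem_ker.mpr hak), map_zero]
    obtain ⟨k₁, hk₁⟩ := factor_through_surjective f.rangeRestrict (s • k0)
      (LinearMap.surjective_rangeRestrict f) hker
    obtain ⟨K, hK⟩ := hext₂ k₁
    refine ⟨u₁ • K, ?_⟩
    apply LinearMap.ext
    intro a
    show u₁ • K (f a) = (u₂ * u₁ * s) • k0 a
    have : K (f a) = u₂ • k₁ (f.rangeRestrict a) := hK (f.rangeRestrict a)
    rw [this, hk₁]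
    show u₁ • u₂ • s • k0 a = (u₂ * u₁ * s) • k0 a
    rw [← mul_smul, ← mul_smul, show u₁ * u₂ * s = u₂ * u₁ * s from by ring]


/-- Characterizations of `u`-`S`-injective modules: `E` is `u`-`S`-injective iff the
contravariant Hom functor sends every short exact sequence to a `u`-`S`-exact sequence, iff
`Ext_R^1(M, E)` is `u`-`S`-torsion for every `M`, iff `Ext_R^n(M, E)` is `u`-`S`-torsion
for every `M` and every `n ≥ 1`. -/
theorem isUSInjective_iff_ext_isUSTorsion
    (R : Type u) [CommRing R] (S : Submonoid R)
    (E : Type u) [AddCommGroup E] [Module R E] :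
    (IsUSInjective.{u, u, u} S E ↔
      ∀ (A B C : Type u) [AddCommGroup A] [AddCommGroup B] [AddCommGroup C]
        [Module R A] [Module R B] [Module R C]
        (f : A →ₗ[R] B) (g : B →ₗ[R] C),
        Function.Injective f → Function.Exact f g → Function.Surjective g →
          IsUSExact S (LinearMap.lcomp R E g) (LinearMap.lcomp R E f)) ∧
    (IsUSInjective.{u, u, u} S E ↔
      ∀ (M : Type u) [AddCommGroup M] [Module R M],
        IsUSTorsion R S
          (((Ext R (ModuleCat.{u} R) 1).obj (Opposite.op (ModuleCat.of R M))).obj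
            (ModuleCat.of R E))) ∧
    (IsUSInjective.{u, u, u} S E ↔
      ∀ (M : Type u) [AddCommGroup M] [Module R M], ∀ n : ℕ, 1 ≤ n →
        IsUSTorsion R S
          (((Ext R (ModuleCat.{u} R) n).obj (Opposite.op (ModuleCat.of R M))).obj
            (ModuleCat.of R E))) := by
  refine ⟨⟨fun h1 => lemA E h1, fun h2 => lemC E (fun M _ _ => lemB E h2 M 1 le_rfl)⟩,
    ⟨fun h1 M _ _ => lemB E (lemA E h1) M 1 le_rfl, fun h3 => lemC E h3⟩,
    ⟨fun h1 M _ _ n hn => lemB E (lemA E h1) M n hn,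
      fun h4 => lemC E (fun M _ _ => h4 M 1 le_rfl)⟩⟩
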